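/- Let F be a field, A an n × m matrix over F with column set E, and X ⊆ E. Let a = rk(A_X) and let B be row equivalent to A such that the submatrix B_X has the block form [[I_a, *],[0, 0]] with the identity I_a in the first a rows. Let A_{/X} be the matrix obtained from B by deleting those a rows and all columns in X. Then M[A]/X = M[A_{/X}]: a set S ⊆ E − X is independent in the contraction M[A]/X if and only if the corresponding columns of A_{/X} are linearly independent. -/

import Mathlib

open Finset

/-- One elementary row operation: swap two rows, scale a row by a nonzero
scalar, or add a scalar multiple of one row to another row. -/
def ElemRowStep {F : Type*} [Field F] {n : ℕ} {E : Type*}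
    (A B : Matrix (Fin n) E F) : Prop :=
  (∃ i j : Fin n, B = A.submatrix (Equiv.swap i j) id) ∨
  (∃ (i : Fin n) (c : F), c ≠ 0 ∧ B = A.updateRow i (c • A i)) ∨
  (∃ (i j : Fin n) (c : F), i ≠ j ∧ B = A.updateRow i (A i + c • A j))

/-- `B` is obtained from `A` by a finite sequence of elementary row operations. -/
def RowEquiv {F : Type*} [Field F] {n : ℕ} {E : Type*}
    (A B : Matrix (Fin n) E F) : Prop :=
  Relation.ReflTransGen ElemRowStep A B

/-- Linear independence of the subfamily of a finitely indexed family of vectors,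
characterized via coefficient functions on the whole index type. -/
theorem finset_li_iff {F : Type*} [Field F] {m : ℕ} {V : Type*} [AddCommGroup V] [Module F V]
    (v : Fin m → V) (T : Finset (Fin m)) :
    LinearIndependent F (fun j : T => v j) ↔
      ∀ g : Fin m → F, ∑ j ∈ T, g j • v j = 0 → ∀ j ∈ T, g j = 0 := by
  classical
  rw [Fintype.linearIndependent_iff]
  constructor
  · intro H g hg j hj
    exact H (fun i : T => g i)
      ((Finset.sum_coe_sort T (fun j => g j • v j)).trans hg) ⟨j, hj⟩
  · intro H g hg i
    have h1 : ∑ j ∈ T, (fun j => if h : j ∈ T then g ⟨j, h⟩ else 0) j • v j = 0 := by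
      rw [← Finset.sum_coe_sort T (fun j => (if h : j ∈ T then g ⟨j, h⟩ else 0) • v j)]
      rw [← hg]
      refine Finset.sum_congr rfl fun j _ => ?_
      rw [dif_pos j.2]
    have := H _ h1 i.1 i.2
    rwa [dif_pos i.2] at this

theorem ElemRowStep.exists_unit {F : Type*} [Field F] {n : ℕ} {E : Type*}
    {A B : Matrix (Fin n) E F} (h : ElemRowStep A B) :
    ∃ M : Matrix (Fin n) (Fin n) F, IsUnit M ∧ B = M * A := by
  classical
  rcases h with ⟨i, j, rfl⟩ | ⟨i, c, hc, rfl⟩ | ⟨i, j, c, hij, rfl⟩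
  · refine ⟨(Equiv.swap i j).toPEquiv.toMatrix, ?_, (PEquiv.toMatrix_toPEquiv_mul _ _).symm⟩
    refine (Matrix.isUnit_iff_isUnit_det _).mpr (Matrix.isUnit_det_of_right_inverse (B := (Equiv.swap i j).toPEquiv.toMatrix) ?_)
    rw [← PEquiv.toMatrix_trans, ← Equiv.toPEquiv_trans, Equiv.swap_swap,
      Equiv.toPEquiv_refl, PEquiv.toMatrix_refl]
  · refine ⟨Matrix.diagonal (Function.update (fun _ => (1 : F)) i c), ?_, ?_⟩
    · rw [Matrix.isUnit_iff_isUnit_det, Matrix.det_diagonal, isUnit_iff_ne_zero]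
      refine Finset.prod_ne_zero_iff.mpr fun r _ => ?_
      rcases eq_or_ne r i with rfl | hri
      · simpa using hc
      · simp [Function.update_of_ne hri]
    · ext r x
      rcases eq_or_ne r i with rfl | hri
      · simp [Matrix.diagonal_mul]
      · simp [Matrix.diagonal_mul, Matrix.updateRow_ne hri, Function.update_of_ne hri]
  · refine ⟨Matrix.transvection i j c, ?_, ?_⟩
    · refine (Matrix.isUnit_iff_isUnit_det _).mpr (Matrix.isUnit_det_of_right_inverse (B := Matrix.transvection i j (-c)) ?_)
      rw [Matrix.transvection_mul_transvection_same (h := hij), add_neg_cancel,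
        Matrix.transvection_zero]
    · have hstd : ∀ (r : Fin n) (x : E),
          (Matrix.single i j c * A) r x = if r = i then c * A j x else 0 := by
        intro r x
        rw [Matrix.mul_apply]
        rcases eq_or_ne r i with rfl | hri
        · rw [if_pos rfl, Finset.sum_eq_single j]
          · simp [Matrix.single]
          · intro k _ hk
            simp [Matrix.single, (Ne.symm hk : j ≠ k)]
          · intro h; exact absurd (Finset.mem_univ j) h
        · rw [if_neg hri]
          refine Finset.sum_eq_zero fun k _ => ?_
          simp [Matrix.single, (Ne.symm hri : i ≠ r)]
      ext r x
      rw [Matrix.transvection, Matrix.add_mul, Matrix.one_mul, Matrix.add_apply, hstd]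
      rcases eq_or_ne r i with rfl | hri
      · simp [Matrix.updateRow_self]
      · simp [hri, Matrix.updateRow_ne hri]

theorem RowEquiv.exists_unit {F : Type*} [Field F] {n : ℕ} {E : Type*}
    {A B : Matrix (Fin n) E F} (h : RowEquiv A B) :
    ∃ M : Matrix (Fin n) (Fin n) F, IsUnit M ∧ B = M * A := by
  induction h with
  | refl => exact ⟨1, isUnit_one, (Matrix.one_mul A).symm⟩
  | tail _ hCB ih =>
    obtain ⟨M, hM, rfl⟩ := ih
    obtain ⟨M', hM', h'⟩ := hCB.exists_unit
    exact ⟨M' * M, hM'.mul hM, by rw [h', Matrix.mul_assoc]⟩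

theorem contract_matrix_representation {F : Type*} [Field F] {n m : ℕ}
    (A B : Matrix (Fin n) (Fin m) F) (hAB : RowEquiv A B)
    (X : Finset (Fin m)) (a : ℕ)
    (ha : a = (A.submatrix id (fun x : X => (x : Fin m))).rank)
    (han : a ≤ n)
    (hzero : ∀ i : Fin n, a ≤ (i : ℕ) → ∀ x ∈ X, B i x = 0)
    (hident : ∃ e : Fin a → X, Function.Injective e ∧
      ∀ i j : Fin a, B ⟨(i : ℕ), lt_of_lt_of_le i.2 han⟩ (e j) = if i = j then 1 else 0)
    (S : Finset (Fin m)) (hSX : Disjoint S X) :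
    (∃ J : Finset (Fin m), J ⊆ X ∧
        LinearIndependent F (fun j : J => A.transpose j.1) ∧
        (∀ J' : Finset (Fin m), J ⊆ J' → J' ⊆ X →
          LinearIndependent F (fun j : J' => A.transpose j.1) → J' = J) ∧
        LinearIndependent F (fun j : (S ∪ J : Finset (Fin m)) => A.transpose j.1)) ↔
      LinearIndependent F
        (fun s : S => fun i : {i : Fin n // a ≤ (i : ℕ)} => B i.1 s.1) := by
  classical
  obtain ⟨e, he, hid⟩ := hident
  obtain ⟨M, hM, hBMA⟩ := hAB.exists_unit
  obtain ⟨u, hu⟩ := hM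
  set N : Matrix (Fin n) (Fin n) F := (↑u⁻¹ : Matrix (Fin n) (Fin n) F) with hN
  have hNM : N * M = 1 := by rw [hN, ← hu]; exact u.inv_mul
  -- columns of B are M applied to columns of A
  have hw : ∀ x : Fin m, B.transpose x = M.mulVec (A.transpose x) := by
    intro x; funext r
    simp [hBMA, Matrix.mul_apply, Matrix.mulVec, dotProduct]
  have hvw : ∀ x : Fin m, A.transpose x = N.mulVec (B.transpose x) := by
    intro x; rw [hw, Matrix.mulVec_mulVec, hNM, Matrix.one_mulVec]
  -- transfer of linear independence between A-columns and B-columns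
  have hIndIff : ∀ T : Finset (Fin m),
      (LinearIndependent F fun j : T => B.transpose j.1) ↔
        (LinearIndependent F fun j : T => A.transpose j.1) := by
    intro T
    have hcomp : (fun j : T => B.transpose j.1) =
        (M.mulVecLin) ∘ (fun j : T => A.transpose j.1) := by
      funext j; simp [hw, Matrix.mulVecLin_apply]
    constructor
    · intro h; rw [hcomp] at h; exact LinearIndependent.of_comp _ h
    · intro h
      rw [hcomp]
      refine h.map' M.mulVecLin ?_
      rw [LinearMap.ker_eq_bot]
      intro x y hxy
      have h2 := congrArg (N.mulVecLin) hxy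
      simpa [Matrix.mulVecLin_apply, Matrix.mulVec_mulVec, hNM, Matrix.one_mulVec] using h2
  set E' : Fin a → Fin m := fun i => (e i : Fin m) with hE'
  have hE'inj : Function.Injective E' := fun i j h => he (Subtype.ext h)
  set ρ : Fin a → Fin n := fun i => ⟨(i : ℕ), lt_of_lt_of_le i.2 han⟩ with hρ
  have hidB : ∀ i j : Fin a, B (ρ i) (E' j) = if i = j then 1 else 0 := hid
  set J₀ : Finset (Fin m) := Finset.image E' Finset.univ with hJ₀
  have hJ₀mem : ∀ {x : Fin m}, x ∈ J₀ ↔ ∃ i, E' i = x := by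
    intro x
    simp [hJ₀]
  have hJ₀X : J₀ ⊆ X := by
    intro x hx
    obtain ⟨i, rfl⟩ := hJ₀mem.mp hx
    exact (e i).2
  have hdisjJ₀ : Disjoint S J₀ := hSX.mono_right hJ₀X
  -- rewriting sums over J₀ as sums over Fin a
  have hsumJ₀ : ∀ (u : Fin m → (Fin n → F)) (g : Fin m → F),
      ∑ j ∈ J₀, g j • u j = ∑ i : Fin a, g (E' i) • u (E' i) := by
    intro u g
    rw [hJ₀, Finset.sum_image (fun x _ y _ h => hE'inj h)]
  -- the columns of B indexed by J₀ are linearly independent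
  have hIndBJ₀ : LinearIndependent F (fun j : J₀ => B.transpose j.1) := by
    rw [finset_li_iff B.transpose]
    intro g hg x hx
    obtain ⟨i₀, rfl⟩ := hJ₀mem.mp hx
    rw [hsumJ₀ B.transpose g] at hg
    have h0 : ∑ i : Fin a, g (E' i) * B (ρ i₀) (E' i) = 0 := by
      simpa [Matrix.transpose_apply] using congrFun hg (ρ i₀)
    have h1 : ∀ i : Fin a, g (E' i) * B (ρ i₀) (E' i) = if i₀ = i then g (E' i) else 0 := by
      intro i; rw [hidB i₀ i]; split <;> ring
    rw [Finset.sum_congr rfl (fun i _ => h1 i), Finset.sum_ite_eq] at h0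
    simpa using h0
  -- any vector vanishing on the bottom rows is a combination of the J₀-columns of B
  have hrepB : ∀ t : Fin n → F, (∀ i : Fin n, a ≤ (i : ℕ) → t i = 0) →
      t = ∑ i : Fin a, t (ρ i) • B.transpose (E' i) := by
    intro t ht
    funext r
    rw [Finset.sum_apply]
    simp only [Pi.smul_apply, smul_eq_mul]
    by_cases hr : a ≤ (r : ℕ)
    · rw [ht r hr]
      symm
      refine Finset.sum_eq_zero fun i _ => ?_
      rw [Matrix.transpose_apply, hzero r hr _ (e i).2, mul_zero]
    · push_neg at hr
      have hρr : ρ ⟨(r : ℕ), hr⟩ = r := by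
        apply Fin.ext; rfl
      have h1 : ∀ i : Fin a, t (ρ i) * B.transpose (E' i) r
          = if (⟨(r : ℕ), hr⟩ : Fin a) = i then t (ρ i) else 0 := by
        intro i
        have hB : B r (E' i) = if (⟨(r : ℕ), hr⟩ : Fin a) = i then 1 else 0 := by
          conv_lhs => rw [← hρr]
          exact hidB _ i
        rw [Matrix.transpose_apply, hB]
        split <;> ring
      rw [Finset.sum_congr rfl (fun i _ => h1 i), Finset.sum_ite_eq]
      simp [hρr]
  -- every column of A in X is a combination of the J₀-columns of A
  have hrepA : ∀ x ∈ X, A.transpose x = ∑ i : Fin a, B (ρ i) x • A.transpose (E' i) := by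
    intro x hx
    have h1 : B.transpose x = ∑ i : Fin a, B (ρ i) x • B.transpose (E' i) :=
      hrepB (B.transpose x) (fun r hr => hzero r hr x hx)
    calc A.transpose x = N.mulVecLin (B.transpose x) := by
          rw [Matrix.mulVecLin_apply, ← hvw]
      _ = N.mulVecLin (∑ i : Fin a, B (ρ i) x • B.transpose (E' i)) := by rw [← h1]
      _ = ∑ i : Fin a, B (ρ i) x • N.mulVecLin (B.transpose (E' i)) := by
          rw [map_sum]; simp only [map_smul]
      _ = ∑ i : Fin a, B (ρ i) x • A.transpose (E' i) := by
          simp only [Matrix.mulVecLin_apply, ← hvw]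
  constructor
  · -- forward direction
    rintro ⟨J, hJX, hIndJ, hmax, hIndSJ⟩
    have hdisjJ : Disjoint S J := hSX.mono_right hJX
    -- every column of A in X is a combination of the J-columns of A
    have hXspan : ∀ x ∈ X, ∃ h : Fin m → F,
        A.transpose x = ∑ j ∈ J, h j • A.transpose j := by
      intro x hx
      by_cases hxJ : x ∈ J
      · refine ⟨fun j => if j = x then 1 else 0, ?_⟩
        have : ∀ j ∈ J, (if j = x then (1 : F) else 0) • A.transpose j
            = if j = x then A.transpose j else 0 := by
          intro j _; split <;> simp
        rw [Finset.sum_congr rfl this, Finset.sum_ite_eq' J x (fun j => A.transpose j),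
          if_pos hxJ]
      · have hne : ¬ LinearIndependent F (fun j : (insert x J : Finset (Fin m)) =>
            A.transpose j.1) := by
          intro hli
          have := hmax _ (Finset.subset_insert x J)
            (Finset.insert_subset hx hJX) hli
          exact hxJ (this ▸ Finset.mem_insert_self x J)
        rw [finset_li_iff A.transpose] at hne
        push_neg at hne
        obtain ⟨g, hg0, j, hjJ', hgj⟩ := hne
        have hgx : g x ≠ 0 := by
          intro h0
          rw [Finset.sum_insert hxJ, h0, zero_smul, zero_add] at hg0
          have hall := (finset_li_iff A.transpose J).mp hIndJ g hg0
          rcases Finset.mem_insert.mp hjJ' with rfl | hjJ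
          · exact hgj h0
          · exact hgj (hall j hjJ)
        refine ⟨fun j => -(g x)⁻¹ * g j, ?_⟩
        have h2 : g x • A.transpose x = -∑ j ∈ J, g j • A.transpose j := by
          apply eq_neg_of_add_eq_zero_left
          have h3 := hg0
          rw [Finset.sum_insert hxJ] at h3
          exact h3
        calc A.transpose x = (g x)⁻¹ • (g x • A.transpose x) := by
              rw [smul_smul, inv_mul_cancel₀ hgx, one_smul]
          _ = (g x)⁻¹ • (-∑ j ∈ J, g j • A.transpose j) := by rw [h2]
          _ = ∑ j ∈ J, (-(g x)⁻¹ * g j) • A.transpose j := by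
              rw [smul_neg, Finset.smul_sum, ← Finset.sum_neg_distrib]
              refine Finset.sum_congr rfl fun j _ => ?_
              rw [smul_smul, neg_mul, neg_smul]
    choose H hH using hXspan
    set H' : Fin m → Fin m → F := fun x => if hx : x ∈ X then H x hx else 0 with hH'def
    have hH' : ∀ x ∈ X, A.transpose x = ∑ j ∈ J, H' x j • A.transpose j := by
      intro x hx
      rw [hH'def]; simp only [dif_pos hx]; exact hH x hx
    -- S ∪ J₀ has independent columns in A
    have hIndASJ₀ : LinearIndependent F
        (fun j : (S ∪ J₀ : Finset (Fin m)) => A.transpose j.1) := by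
      rw [finset_li_iff A.transpose]
      intro g hg x hx
      rw [Finset.sum_union hdisjJ₀] at hg
      set G : Fin m → F := fun j => (if j ∈ S then g j else 0) +
        (if j ∈ J then ∑ x ∈ J₀, g x * H' x j else 0) with hG
      have hsumG : ∑ j ∈ S ∪ J, G j • A.transpose j = 0 := by
        rw [Finset.sum_union hdisjJ]
        have h1 : ∑ j ∈ S, G j • A.transpose j = ∑ j ∈ S, g j • A.transpose j := by
          refine Finset.sum_congr rfl fun j hj => ?_
          have hjJ : j ∉ J := Finset.disjoint_left.mp hdisjJ hj
          simp [hG, hj, hjJ]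
        have h2 : ∑ j ∈ J, G j • A.transpose j = ∑ x ∈ J₀, g x • A.transpose x := by
          calc ∑ j ∈ J, G j • A.transpose j
              = ∑ j ∈ J, ∑ x ∈ J₀, (g x * H' x j) • A.transpose j := by
                refine Finset.sum_congr rfl fun j hj => ?_
                have hjS : j ∉ S := Finset.disjoint_right.mp hdisjJ hj
                simp [hG, hj, hjS, Finset.sum_smul]
            _ = ∑ x ∈ J₀, ∑ j ∈ J, (g x * H' x j) • A.transpose j := Finset.sum_comm
            _ = ∑ x ∈ J₀, g x • A.transpose x := by
                refine Finset.sum_congr rfl fun x hxJ₀ => ?_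
                rw [hH' x (hJ₀X hxJ₀), Finset.smul_sum]
                refine Finset.sum_congr rfl fun j _ => ?_
                rw [smul_smul]
        rw [h1, h2]; exact hg
      have hall := (finset_li_iff A.transpose (S ∪ J)).mp hIndSJ G hsumG
      have hgS : ∀ s ∈ S, g s = 0 := by
        intro s hs
        have h3 := hall s (Finset.mem_union_left _ hs)
        have hsJ : s ∉ J := Finset.disjoint_left.mp hdisjJ hs
        simpa [hG, hs, hsJ] using h3
      have hsum0 : ∑ j ∈ J₀, g j • A.transpose j = 0 := by
        have hS0 : ∑ j ∈ S, g j • A.transpose j = 0 :=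
          Finset.sum_eq_zero fun s hs => by rw [hgS s hs, zero_smul]
        rw [hS0, zero_add] at hg; exact hg
      have hIndAJ₀ := (hIndIff J₀).mp hIndBJ₀
      rcases Finset.mem_union.mp hx with hxS | hxJ₀
      · exact hgS x hxS
      · exact (finset_li_iff A.transpose J₀).mp hIndAJ₀ g hsum0 x hxJ₀
    have hIndBSJ₀ := (hIndIff (S ∪ J₀)).mpr hIndASJ₀
    -- now show independence of the bottom parts of the S-columns of B
    refine (finset_li_iff (fun j => fun i : {i : Fin n // a ≤ (i : ℕ)} => B i.1 j) S).mpr ?_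
    intro g hg x hxS
    set t : Fin n → F := ∑ s ∈ S, g s • B.transpose s with ht
    have htbot : ∀ i : Fin n, a ≤ (i : ℕ) → t i = 0 := by
      intro i hi
      have h3 := congrFun hg (⟨i, hi⟩ : {i : Fin n // a ≤ (i : ℕ)})
      simpa [ht, Matrix.transpose_apply] using h3
    have htrep := hrepB t htbot
    set G : Fin m → F := fun j => if j ∈ S then g j
      else -(∑ i : Fin a, if E' i = j then t (ρ i) else 0) with hG
    have hsumG : ∑ j ∈ S ∪ J₀, G j • B.transpose j = 0 := by
      rw [Finset.sum_union hdisjJ₀]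
      have h1 : ∑ j ∈ S, G j • B.transpose j = t := by
        rw [ht]
        refine Finset.sum_congr rfl fun j hj => ?_
        simp [hG, hj]
      have h2 : ∑ j ∈ J₀, G j • B.transpose j
          = -∑ i : Fin a, t (ρ i) • B.transpose (E' i) := by
        rw [hsumJ₀ B.transpose G, ← Finset.sum_neg_distrib]
        refine Finset.sum_congr rfl fun i _ => ?_
        have hiS : E' i ∉ S := Finset.disjoint_right.mp hSX ((e i).2)
        have hinner : (∑ i' : Fin a, if E' i' = E' i then t (ρ i') else 0) = t (ρ i) := by
          have : ∀ i' : Fin a, (if E' i' = E' i then t (ρ i') else 0)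
              = if i' = i then t (ρ i') else 0 := by
            intro i'; congr 1; simp [hE'inj.eq_iff]
          rw [Finset.sum_congr rfl (fun i' _ => this i'), Finset.sum_ite_eq']
          simp
        rw [hG]; simp only [hiS, if_false, hinner, neg_smul]
      rw [h1, h2, ← htrep, add_neg_cancel]
    have hall := (finset_li_iff B.transpose (S ∪ J₀)).mp hIndBSJ₀ G hsumG
    have h4 := hall x (Finset.mem_union_left _ hxS)
    simpa [hG, hxS] using h4
  · -- backward direction
    intro hRHS
    refine ⟨J₀, hJ₀X, (hIndIff J₀).mp hIndBJ₀, ?_, ?_⟩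
    · intro J' hJ₀J' hJ'X hIndJ'
      refine Finset.Subset.antisymm ?_ hJ₀J'
      intro x hxJ'
      by_contra hxJ₀
      have hrep := hrepA x (hJ'X hxJ')
      set G : Fin m → F := fun j => if j = x then 1
        else -(∑ i : Fin a, if E' i = j then B (ρ i) x else 0) with hG
      have hsum : ∑ j ∈ J', G j • A.transpose j = 0 := by
        have hsub : insert x J₀ ⊆ J' := Finset.insert_subset hxJ' hJ₀J'
        rw [← Finset.sum_subset hsub ?vanish]
        case vanish =>
          intro j hjJ' hjnot
          have hjx : j ≠ x := fun h => hjnot (h ▸ Finset.mem_insert_self x J₀)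
          have hjJ₀ : j ∉ J₀ := fun h => hjnot (Finset.mem_insert_of_mem h)
          have hzero' : (∑ i : Fin a, if E' i = j then B (ρ i) x else 0) = 0 := by
            refine Finset.sum_eq_zero fun i _ => ?_
            rw [if_neg]
            intro h
            exact hjJ₀ (h ▸ hJ₀mem.mpr ⟨i, rfl⟩)
          rw [hG]; simp [hjx, hzero']
        rw [Finset.sum_insert hxJ₀]
        have hGx : G x = 1 := by rw [hG]; simp
        have h2 : ∑ j ∈ J₀, G j • A.transpose j
            = -∑ i : Fin a, B (ρ i) x • A.transpose (E' i) := by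
          rw [hsumJ₀ A.transpose G, ← Finset.sum_neg_distrib]
          refine Finset.sum_congr rfl fun i _ => ?_
          have hix : E' i ≠ x := fun h => hxJ₀ (h ▸ hJ₀mem.mpr ⟨i, rfl⟩)
          have hinner : (∑ i' : Fin a, if E' i' = E' i then B (ρ i') x else 0)
              = B (ρ i) x := by
            have : ∀ i' : Fin a, (if E' i' = E' i then B (ρ i') x else 0)
                = if i' = i then B (ρ i') x else 0 := by
              intro i'; congr 1; simp [hE'inj.eq_iff]
            rw [Finset.sum_congr rfl (fun i' _ => this i'), Finset.sum_ite_eq']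
            simp
          rw [hG]; simp only [hix, if_false, hinner, neg_smul]
        rw [hGx, one_smul, h2, ← hrep, add_neg_cancel]
      have h3 := (finset_li_iff A.transpose J').mp hIndJ' G hsum x hxJ'
      rw [hG] at h3
      simp at h3
    · -- S ∪ J₀ has independent columns in A
      have hIndBSJ₀ : LinearIndependent F
          (fun j : (S ∪ J₀ : Finset (Fin m)) => B.transpose j.1) := by
        rw [finset_li_iff B.transpose]
        intro g hg x hx
        rw [Finset.sum_union hdisjJ₀] at hg
        have hgS : ∀ s ∈ S, g s = 0 := by
          have hRHS' := (finset_li_iff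
            (fun j => fun i : {i : Fin n // a ≤ (i : ℕ)} => B i.1 j) S).mp hRHS
          apply hRHS' g
          funext i
          have h3 := congrFun hg i.1
          have hJ₀0 : ∑ j ∈ J₀, g j * B i.1 j = 0 :=
            Finset.sum_eq_zero fun j hj => by rw [hzero i.1 i.2 j (hJ₀X hj), mul_zero]
          have hS0 : ∑ s ∈ S, g s * B i.1 s = 0 := by
            simp only [Pi.add_apply, Finset.sum_apply, Pi.smul_apply, smul_eq_mul,
              Matrix.transpose_apply, Pi.zero_apply] at h3
            rw [hJ₀0, add_zero] at h3
            exact h3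
          simp only [Finset.sum_apply, Pi.smul_apply, smul_eq_mul, Pi.zero_apply]
          exact hS0
        have hsum0 : ∑ j ∈ J₀, g j • B.transpose j = 0 := by
          have hS0 : ∑ j ∈ S, g j • B.transpose j = 0 :=
            Finset.sum_eq_zero fun s hs => by rw [hgS s hs, zero_smul]
          rw [hS0, zero_add] at hg; exact hg
        rcases Finset.mem_union.mp hx with hxS | hxJ₀
        · exact hgS x hxS
        · exact (finset_li_iff B.transpose J₀).mp hIndBJ₀ g hsum0 x hxJ₀
      exact (hIndIff (S ∪ J₀)).mp hIndBSJ₀
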